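/- arXiv:1601.05617 — 3 statements merged into one kernel-verified Lean document; each statement's English description precedes it below -/
import Mathlib

section
/- Let A and B be symmetric positive definite n×n real matrices with eigenvalues λ₁(A) ≤ ... ≤ λₙ(A) and λ₁(B) ≤ ... ≤ λₙ(B). Then for any increasing convex function f : ℝ → ℝ, ∑_{i=1}^n f(λᵢ(A)·λᵢ(B)) ≥ ∑_{i=1}^n f(A(i,i)·B(i,i)), where A(i,i) and B(i,i) denote diagonal entries. -/
open Finset

lemma key_convex {f : ℝ → ℝ} (hconv : ConvexOn ℝ Set.univ f)
    {c u v : ℝ} (hcu : c ≤ u) (hcv : c ≤ v) :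
    f u + f v ≤ f c + f (u + v - c) := by
  set e := u + v - c with he
  have hue : u ≤ e := by simp only [he]; linarith
  have hve : v ≤ e := by simp only [he]; linarith
  rcases eq_or_lt_of_le (hcu.trans hue) with h | h
  · have h1 : u = c := le_antisymm (h ▸ hue) hcu
    have h2 : v = c := by simp only [he] at h; linarith
    have h3 : e = c := by simp only [he]; linarith
    rw [h1, h2, h3]
  · set θ := (e - u) / (e - c) with hθ
    have hec : (0:ℝ) < e - c := by linarith
    have hθ0 : 0 ≤ θ := div_nonneg (by linarith) hec.le
    have hθ1 : θ ≤ 1 := by rw [hθ, div_le_one hec]; linarith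
    have hmul : θ * (e - c) = e - u := div_mul_cancel₀ _ hec.ne'
    have h1 : θ • c + (1 - θ) • e = u := by
      simp only [smul_eq_mul]; linear_combination -hmul
    have h2 : (1 - θ) • c + θ • e = v := by
      simp only [smul_eq_mul]; linear_combination hmul + he
    have j1 := hconv.2 (Set.mem_univ c) (Set.mem_univ e) hθ0 (sub_nonneg.2 hθ1) (by ring)
    have j2 := hconv.2 (Set.mem_univ c) (Set.mem_univ e) (sub_nonneg.2 hθ1) hθ0 (by ring)
    rw [h1] at j1
    rw [h2] at j2
    have hs := add_le_add j1 j2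
    simp only [smul_eq_mul] at hs
    calc f u + f v ≤ (θ * f c + (1 - θ) * f e) + ((1 - θ) * f c + θ * f e) := hs
      _ = f c + f e := by ring

lemma exchange {f : ℝ → ℝ} (hf : Monotone f) (hconv : ConvexOn ℝ Set.univ f)
    {x X y Y : ℝ} (hx : 0 ≤ x) (hy : 0 ≤ y) (hxX : x ≤ X) (hyY : y ≤ Y) :
    f (x * Y) + f (X * y) ≤ f (x * y) + f (X * Y) := by
  have h1 : x * y ≤ x * Y := mul_le_mul_of_nonneg_left hyY hx
  have h2 : x * y ≤ X * y := mul_le_mul_of_nonneg_right hxX hy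
  calc f (x * Y) + f (X * y) ≤ f (x * y) + f (x * Y + X * y - x * y) := key_convex hconv h1 h2
    _ ≤ f (x * y) + f (X * Y) := by
        have : x * Y + X * y - x * y ≤ X * Y := by nlinarith
        exact add_le_add le_rfl (hf this)

lemma perm_sum_le {n : ℕ} {μ ν : Fin n → ℝ} (hμmono : Monotone μ) (hνmono : Monotone ν)
    (hμ0 : ∀ i, 0 ≤ μ i) (hν0 : ∀ i, 0 ≤ ν i)
    {f : ℝ → ℝ} (hf : Monotone f) (hconv : ConvexOn ℝ Set.univ f) :
    ∀ (k : ℕ) (σ : Equiv.Perm (Fin n)),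
      (univ.filter fun i => σ i ≠ i).card ≤ k →
      ∑ i, f (μ (σ i) * ν i) ≤ ∑ i, f (μ i * ν i) := by
  intro k
  induction k with
  | zero =>
    intro σ hσ
    have h : ∀ i, σ i = i := by
      intro i
      by_contra h
      have : i ∈ univ.filter fun i => σ i ≠ i := by simp [h]
      have := Finset.card_pos.2 ⟨i, this⟩
      omega
    exact le_of_eq (Finset.sum_congr rfl fun i _ => by rw [h i])
  | succ k ih =>
    intro σ hσ
    set s := univ.filter fun i => σ i ≠ i with hs
    rcases s.eq_empty_or_nonempty with he | hne
    · have h : ∀ i, σ i = i := by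
        intro i
        by_contra h
        have : i ∈ s := by simp [hs, h]
        simp [he] at this
      exact le_of_eq (Finset.sum_congr rfl fun i _ => by rw [h i])
    · set M := s.max' hne with hM
      have hMs : M ∈ s := s.max'_mem hne
      have hMne : σ M ≠ M := (Finset.mem_filter.1 hMs).2
      set a := σ M with ha
      set b := σ.symm M with hb
      have hσb : σ b = M := σ.apply_symm_apply M
      have haM : a ≠ M := hMne
      have haS : a ∈ s := by
        refine Finset.mem_filter.2 ⟨mem_univ _, fun h => ?_⟩
        exact hMne (σ.injective h)
      have haM' : a < M := lt_of_le_of_ne (s.le_max' a haS) haM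
      have hbM : b ≠ M := by
        intro h
        apply hMne
        calc σ M = σ b := by rw [h]
          _ = M := hσb
      have hbS : b ∈ s := by
        refine Finset.mem_filter.2 ⟨mem_univ _, fun h => ?_⟩
        exact hbM (by rw [← hσb, h])
      have hbM' : b < M := lt_of_le_of_ne (s.le_max' b hbS) hbM
      set σ' := σ.trans (Equiv.swap a M) with hσ'
      have hσ'app : ∀ x, σ' x = Equiv.swap a M (σ x) := fun x => rfl
      have hσ'M : σ' M = M := by rw [hσ'app, ← ha, Equiv.swap_apply_left]
      have hσ'b : σ' b = a := by rw [hσ'app, hσb, Equiv.swap_apply_right]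
      have hsub : (univ.filter fun i => σ' i ≠ i) ⊆ s.erase M := by
        intro x hx
        have hx' : σ' x ≠ x := (Finset.mem_filter.1 hx).2
        refine Finset.mem_erase.2 ⟨fun h => hx' (h ▸ hσ'M), ?_⟩
        refine Finset.mem_filter.2 ⟨mem_univ _, fun h => ?_⟩
        rw [hσ'app, h] at hx'
        rcases Equiv.swap_apply_ne_self_iff.1 hx' with ⟨-, h2⟩
        rcases h2 with rfl | rfl
        · exact (Finset.mem_filter.1 haS).2 h
        · exact hMne h
      have hcard : (univ.filter fun i => σ' i ≠ i).card ≤ k := by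
        have h1 := Finset.card_le_card hsub
        have h2 : (s.erase M).card = s.card - 1 := Finset.card_erase_of_mem hMs
        have h3 : 0 < s.card := Finset.card_pos.2 hne
        omega
      have hIH := ih σ' hcard
      refine le_trans ?_ hIH
      have hbmem : b ∈ univ.erase M := Finset.mem_erase.2 ⟨hbM, mem_univ b⟩
      have hsplit : ∀ g : Fin n → ℝ,
          ∑ i, g i = g M + (g b + ∑ i ∈ (univ.erase M).erase b, g i) := by
        intro g
        rw [Finset.add_sum_erase _ g hbmem, Finset.add_sum_erase _ g (mem_univ M)]
      rw [hsplit fun i => f (μ (σ i) * ν i), hsplit fun i => f (μ (σ' i) * ν i)]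
      have htail : ∑ i ∈ (univ.erase M).erase b, f (μ (σ i) * ν i)
          = ∑ i ∈ (univ.erase M).erase b, f (μ (σ' i) * ν i) := by
        refine Finset.sum_congr rfl fun x hx => ?_
        have hxb : x ≠ b := (Finset.mem_erase.1 hx).1
        have hxM : x ≠ M := (Finset.mem_erase.1 (Finset.mem_erase.1 hx).2).1
        have h1 : σ x ≠ a := fun h => hxM (σ.injective (h.trans ha))
        have h2 : σ x ≠ M := fun h => hxb (by rw [hb, ← h, Equiv.symm_apply_apply])
        rw [hσ'app, Equiv.swap_apply_of_ne_of_ne h1 h2]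
      rw [htail, hσ'M, hσ'b, hσb, ← ha]
      have hkey := exchange hf hconv (hμ0 a) (hν0 b) (hμmono haM'.le) (hνmono hbM'.le)
      linarith [hkey]

lemma ds_sum_le {n : ℕ} {μ ν : Fin n → ℝ} (hμmono : Monotone μ) (hνmono : Monotone ν)
    (hμ0 : ∀ i, 0 ≤ μ i) (hν0 : ∀ i, 0 ≤ ν i)
    {f : ℝ → ℝ} (hf : Monotone f) (hconv : ConvexOn ℝ Set.univ f)
    (R : Matrix (Fin n) (Fin n) ℝ) (hR : R ∈ doublyStochastic ℝ (Fin n)) :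
    ∑ j, ∑ k, R j k * f (μ j * ν k) ≤ ∑ i, f (μ i * ν i) := by
  obtain ⟨w, hw0, hw1, hw⟩ := exists_eq_sum_perm_of_mem_doublyStochastic hR
  have hRjk : ∀ j k, R j k = ∑ σ : Equiv.Perm (Fin n), w σ * (σ.permMatrix ℝ) j k := by
    intro j k
    rw [← hw]
    simp [Finset.sum_apply, Matrix.sum_apply]
  have key : ∀ (σ : Equiv.Perm (Fin n)) (j : Fin n),
      ∑ k, (w σ * (σ.permMatrix ℝ) j k) * f (μ j * ν k) = w σ * f (μ j * ν (σ j)) := by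
    intro σ j
    simp [Equiv.Perm.permMatrix, PEquiv.toMatrix_apply, Equiv.toPEquiv_apply, mul_ite, ite_mul]
  calc ∑ j, ∑ k, R j k * f (μ j * ν k)
      = ∑ j, ∑ σ : Equiv.Perm (Fin n), ∑ k, (w σ * (σ.permMatrix ℝ) j k) * f (μ j * ν k) := by
        refine Finset.sum_congr rfl fun j _ => ?_
        rw [Finset.sum_comm]
        refine Finset.sum_congr rfl fun k _ => ?_
        rw [hRjk j k, Finset.sum_mul]
    _ = ∑ σ : Equiv.Perm (Fin n), w σ * ∑ j, f (μ j * ν (σ j)) := by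
        rw [Finset.sum_comm]
        refine Finset.sum_congr rfl fun σ _ => ?_
        rw [Finset.mul_sum]
        exact Finset.sum_congr rfl fun j _ => key σ j
    _ ≤ ∑ σ : Equiv.Perm (Fin n), w σ * ∑ i, f (μ i * ν i) := by
        refine Finset.sum_le_sum fun σ _ => mul_le_mul_of_nonneg_left ?_ (hw0 σ)
        have hre : ∑ j, f (μ j * ν (σ j)) = ∑ i, f (μ (σ⁻¹ i) * ν i) := by
          rw [← Equiv.sum_comp σ (fun i => f (μ (σ⁻¹ i) * ν i))]
          simp
        rw [hre]
        exact perm_sum_le hμmono hνmono hμ0 hν0 hf hconv _ σ⁻¹ le_rfl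
    _ = ∑ i, f (μ i * ν i) := by rw [← Finset.sum_mul, hw1, one_mul]

lemma jensen_step {n : ℕ} (μ ν : Fin n → ℝ)
    {f : ℝ → ℝ} (hconv : ConvexOn ℝ Set.univ f)
    (S T : Matrix (Fin n) (Fin n) ℝ) (hS : S ∈ doublyStochastic ℝ (Fin n))
    (hT : T ∈ doublyStochastic ℝ (Fin n)) (i : Fin n) :
    f ((∑ j, S i j * μ j) * (∑ k, T i k * ν k))
      ≤ ∑ j, ∑ k, (S i j * T i k) * f (μ j * ν k) := by
  have hw0 : ∀ p ∈ (univ : Finset (Fin n × Fin n)), 0 ≤ S i p.1 * T i p.2 := fun p _ =>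
    mul_nonneg (nonneg_of_mem_doublyStochastic hS) (nonneg_of_mem_doublyStochastic hT)
  have hw1 : ∑ p : Fin n × Fin n, S i p.1 * T i p.2 = 1 := by
    rw [Fintype.sum_prod_type, ← Finset.sum_mul_sum,
      sum_row_of_mem_doublyStochastic hS i, sum_row_of_mem_doublyStochastic hT i, one_mul]
  have h := hconv.map_sum_le (t := (univ : Finset (Fin n × Fin n)))
    (w := fun p => S i p.1 * T i p.2) (p := fun p => μ p.1 * ν p.2) hw0 hw1
    (fun p _ => Set.mem_univ _)
  have hsum : ∑ p : Fin n × Fin n, (S i p.1 * T i p.2) • (μ p.1 * ν p.2)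
      = (∑ j, S i j * μ j) * (∑ k, T i k * ν k) := by
    rw [Finset.sum_mul_sum, Fintype.sum_prod_type]
    simp only [smul_eq_mul]
    exact Finset.sum_congr rfl fun j _ => Finset.sum_congr rfl fun k _ => by ring
  rw [hsum] at h
  refine h.trans (le_of_eq ?_)
  rw [Fintype.sum_prod_type]
  simp [smul_eq_mul]

lemma diag_eq {n : ℕ} (A : Matrix (Fin n) (Fin n) ℝ) (hA : A.IsHermitian) (i : Fin n) :
    A i i = ∑ k, ((hA.eigenvectorUnitary : Matrix (Fin n) (Fin n) ℝ) i k)^2 * hA.eigenvalues k := by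
  conv_lhs => rw [hA.spectral_theorem]
  rw [Unitary.conjStarAlgAut_apply, Matrix.mul_apply]
  refine Finset.sum_congr rfl fun k _ => ?_
  rw [Matrix.mul_diagonal, Matrix.star_apply]
  simp only [Function.comp_apply, star_trivial]
  have : (RCLike.ofReal (hA.eigenvalues k) : ℝ) = hA.eigenvalues k := rfl
  rw [this]
  ring

lemma row_sum {n : ℕ} (A : Matrix (Fin n) (Fin n) ℝ) (hA : A.IsHermitian) (i : Fin n) :
    ∑ k, ((hA.eigenvectorUnitary : Matrix (Fin n) (Fin n) ℝ) i k)^2 = 1 := by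
  have h : ((hA.eigenvectorUnitary : Matrix (Fin n) (Fin n) ℝ) *
      star (hA.eigenvectorUnitary : Matrix (Fin n) (Fin n) ℝ)) i i = 1 := by
    rw [Matrix.mem_unitaryGroup_iff.mp hA.eigenvectorUnitary.2]
    simp
  rw [← h, Matrix.mul_apply]
  exact Finset.sum_congr rfl fun k _ => by simp [Matrix.star_apply, sq]

lemma col_sum {n : ℕ} (A : Matrix (Fin n) (Fin n) ℝ) (hA : A.IsHermitian) (k : Fin n) :
    ∑ i, ((hA.eigenvectorUnitary : Matrix (Fin n) (Fin n) ℝ) i k)^2 = 1 := by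
  have h : (star (hA.eigenvectorUnitary : Matrix (Fin n) (Fin n) ℝ) *
      (hA.eigenvectorUnitary : Matrix (Fin n) (Fin n) ℝ)) k k = 1 := by
    rw [Matrix.mem_unitaryGroup_iff'.mp hA.eigenvectorUnitary.2]
    simp
  rw [← h, Matrix.mul_apply]
  exact Finset.sum_congr rfl fun j _ => by simp [Matrix.star_apply, sq]

/-- Trace inequality for eigenvalues vs diagonal entries of two symmetric
positive definite matrices (Lemma 2.2 of the paper). -/
theorem stmt0 {n : ℕ} (A B : Matrix (Fin n) (Fin n) ℝ)
    (hA : A.IsHermitian) (hB : B.IsHermitian)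
    (hApos : A.PosDef) (hBpos : B.PosDef)
    (μ ν : Fin n → ℝ) (hμmono : Monotone μ) (hνmono : Monotone ν)
    (hμ : ∃ e : Equiv.Perm (Fin n), ∀ i, μ i = hA.eigenvalues (e i))
    (hν : ∃ e : Equiv.Perm (Fin n), ∀ i, ν i = hB.eigenvalues (e i))
    (f : ℝ → ℝ) (hf : Monotone f) (hconv : ConvexOn ℝ Set.univ f) :
    ∑ i, f (A i i * B i i) ≤ ∑ i, f (μ i * ν i) := by
  obtain ⟨e, he⟩ := hμ
  obtain ⟨d, hd⟩ := hν
  set U := (hA.eigenvectorUnitary : Matrix (Fin n) (Fin n) ℝ) with hU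
  set V := (hB.eigenvectorUnitary : Matrix (Fin n) (Fin n) ℝ) with hV
  set S : Matrix (Fin n) (Fin n) ℝ := fun i j => (U i (e j))^2 with hSdef
  set T : Matrix (Fin n) (Fin n) ℝ := fun i j => (V i (d j))^2 with hTdef
  have hSnn : ∀ i j, 0 ≤ S i j := fun i j => sq_nonneg _
  have hTnn : ∀ i j, 0 ≤ T i j := fun i j => sq_nonneg _
  have hSrow : ∀ i, ∑ j, S i j = 1 := by
    intro i
    rw [Fintype.sum_equiv e (fun j => S i j) (fun k => (U i k)^2) (fun j => rfl)]
    exact row_sum A hA i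
  have hScol : ∀ j, ∑ i, S i j = 1 := fun j => col_sum A hA (e j)
  have hTrow : ∀ i, ∑ j, T i j = 1 := by
    intro i
    rw [Fintype.sum_equiv d (fun j => T i j) (fun k => (V i k)^2) (fun j => rfl)]
    exact row_sum B hB i
  have hTcol : ∀ j, ∑ i, T i j = 1 := fun j => col_sum B hB (d j)
  have hS : S ∈ doublyStochastic ℝ (Fin n) :=
    mem_doublyStochastic_iff_sum.2 ⟨hSnn, hSrow, hScol⟩
  have hT : T ∈ doublyStochastic ℝ (Fin n) :=
    mem_doublyStochastic_iff_sum.2 ⟨hTnn, hTrow, hTcol⟩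
  have hAd : ∀ i, A i i = ∑ j, S i j * μ j := by
    intro i
    rw [diag_eq A hA i]
    exact (Fintype.sum_equiv e (fun j => S i j * μ j)
      (fun k => (U i k)^2 * hA.eigenvalues k) (fun j => by
        show S i j * μ j = (U i (e j))^2 * hA.eigenvalues (e j)
        rw [he j])).symm
  have hBd : ∀ i, B i i = ∑ j, T i j * ν j := by
    intro i
    rw [diag_eq B hB i]
    exact (Fintype.sum_equiv d (fun j => T i j * ν j)
      (fun k => (V i k)^2 * hB.eigenvalues k) (fun j => by
        show T i j * ν j = (V i (d j))^2 * hB.eigenvalues (d j)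
        rw [hd j])).symm
  have hμ0 : ∀ i, 0 ≤ μ i := by
    intro i
    rw [he i]
    exact (hApos.eigenvalues_pos (e i)).le
  have hν0 : ∀ i, 0 ≤ ν i := by
    intro i
    rw [hd i]
    exact (hBpos.eigenvalues_pos (d i)).le
  set R : Matrix (Fin n) (Fin n) ℝ := fun j k => ∑ i, S i j * T i k with hRdef
  have hR : R ∈ doublyStochastic ℝ (Fin n) := by
    rw [mem_doublyStochastic_iff_sum]
    refine ⟨fun j k => Finset.sum_nonneg fun i _ => mul_nonneg (hSnn i j) (hTnn i k),
      fun j => ?_, fun k => ?_⟩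
    · rw [show ∑ k, R j k = ∑ k, ∑ i, S i j * T i k from rfl, Finset.sum_comm]
      calc ∑ i, ∑ k, S i j * T i k = ∑ i, S i j * ∑ k, T i k := by
            exact Finset.sum_congr rfl fun i _ => (Finset.mul_sum _ _ _).symm
        _ = ∑ i, S i j := by
            exact Finset.sum_congr rfl fun i _ => by rw [hTrow i, mul_one]
        _ = 1 := hScol j
    · rw [show ∑ j, R j k = ∑ j, ∑ i, S i j * T i k from rfl, Finset.sum_comm]
      calc ∑ i, ∑ j, S i j * T i k = ∑ i, (∑ j, S i j) * T i k := by
            exact Finset.sum_congr rfl fun i _ => (Finset.sum_mul _ _ _).symm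
        _ = ∑ i, T i k := by
            exact Finset.sum_congr rfl fun i _ => by rw [hSrow i, one_mul]
        _ = 1 := hTcol k
  calc ∑ i, f (A i i * B i i)
      = ∑ i, f ((∑ j, S i j * μ j) * (∑ k, T i k * ν k)) :=
        Finset.sum_congr rfl fun i _ => by rw [hAd i, hBd i]
    _ ≤ ∑ i, ∑ j, ∑ k, (S i j * T i k) * f (μ j * ν k) :=
        Finset.sum_le_sum fun i _ => jensen_step μ ν hconv S T hS hT i
    _ = ∑ j, ∑ k, R j k * f (μ j * ν k) := by
        rw [Finset.sum_comm]
        refine Finset.sum_congr rfl fun j _ => ?_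
        rw [Finset.sum_comm]
        refine Finset.sum_congr rfl fun k _ => ?_
        rw [show R j k = ∑ i, S i j * T i k from rfl, Finset.sum_mul]
    _ ≤ ∑ i, f (μ i * ν i) := ds_sum_le hμmono hνmono hμ0 hν0 hf hconv R hR
end

section
/- Let A and B be symmetric positive semidefinite n×n real matrices and let A∘B denote their Hadamard (entrywise) product. Then the eigenvalues of A∘B, listed in decreasing order, are weakly majorized by the sequence (λᵢ(A)·λᵢ(B))ᵢ where eigenvalues of A and B are both listed in decreasing order: for each k ≤ n, ∑_{i=1}^k λᵢ(A∘B) ≤ ∑_{i=1}^k λᵢ(A)·λᵢ(B). -/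
open Finset


private lemma spectral_decomp {n : ℕ} {A : Matrix (Fin n) (Fin n) ℝ} (hA : A.IsHermitian)
    (μ : Fin n → ℝ) (e : Equiv.Perm (Fin n)) (he : ∀ i, μ i = hA.eigenvalues (e i)) :
    ∃ u : Fin n → Fin n → ℝ,
      (∀ a b, A a b = ∑ i, μ i * (u i a * u i b)) ∧
      (∀ i j, ∑ a, u i a * u j a = if i = j then (1:ℝ) else 0) ∧
      (∀ a b, ∑ i, u i a * u i b = if a = b then (1:ℝ) else 0) := by
  set U : Matrix (Fin n) (Fin n) ℝ := (hA.eigenvectorUnitary : Matrix (Fin n) (Fin n) ℝ) with hU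
  have hstar : ∀ a b, star U a b = U b a := by
    intro a b; simp [Matrix.star_apply]
  have h1 : star U * U = 1 := Matrix.mem_unitaryGroup_iff'.mp hA.eigenvectorUnitary.2
  have h2 : U * star U = 1 := Matrix.mem_unitaryGroup_iff.mp hA.eigenvectorUnitary.2
  refine ⟨fun i a => U a (e i), ?_, ?_, ?_⟩
  · intro a b
    have hsp := hA.spectral_theorem
    have key : A a b = ∑ c, U a c * hA.eigenvalues c * U b c := by
      conv_lhs => rw [hsp, Unitary.conjStarAlgAut_apply, ← hU]
      rw [Matrix.mul_apply]
      refine Finset.sum_congr rfl fun c _ => ?_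
      rw [Matrix.mul_diagonal, hstar]
      simp only [Function.comp_apply, RCLike.ofReal_real_eq_id, id_eq]
    rw [key, ← Equiv.sum_comp e (fun c => U a c * hA.eigenvalues c * U b c)]
    refine Finset.sum_congr rfl fun i _ => by rw [he]; ring
  · intro i j
    have h := congrFun (congrFun h1 (e i)) (e j)
    rw [Matrix.mul_apply] at h
    simp only [hstar] at h
    show ∑ a, U a (e i) * U a (e j) = _
    rw [h]
    simp [Matrix.one_apply, EmbeddingLike.apply_eq_iff_eq]
  · intro a b
    have h := congrFun (congrFun h2 a) b
    rw [Matrix.mul_apply] at h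
    simp only [hstar] at h
    show ∑ i, U a (e i) * U b (e i) = _
    rw [Equiv.sum_comp e (fun c => U a c * U b c), h]
    simp [Matrix.one_apply]


private lemma sum_Ico_telescope (g : ℕ → ℝ) {i nn : ℕ} (h : i ≤ nn) :
    ∑ p ∈ Ico i nn, (g p - g (p + 1)) = g i - g nn := by
  rw [Finset.sum_Ico_eq_sum_range]
  have : ∀ p ∈ range (nn - i), g (i + p) - g (i + p + 1)
      = (fun q => g (i + q)) p - (fun q => g (i + q)) (p+1) := by intro p _; simp [Nat.add_assoc]
  rw [Finset.sum_congr rfl this, Finset.sum_range_sub' (fun q => g (i + q))]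
  simp [Nat.add_sub_cancel' h]

private lemma card_filter_lt_fin {n m : ℕ} (hm : m ≤ n) :
    ((univ : Finset (Fin n)).filter (fun i : Fin n => (i : ℕ) < m)).card = m := by
  have : ((univ : Finset (Fin n)).filter (fun i : Fin n => (i : ℕ) < m))
      = (univ : Finset (Fin m)).map (Fin.castLEEmb hm) := by
    ext i
    simp only [mem_filter, mem_univ, true_and, mem_map, Fin.castLEEmb]
    constructor
    · intro h; exact ⟨⟨i, h⟩, by simp [Fin.castLE, Fin.ext_iff]⟩
    · rintro ⟨j, rfl⟩; simp [j.2]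
  rw [this, card_map, card_univ, Fintype.card_fin]

private lemma abel_bound {n k : ℕ} (hk : k ≤ n) (μ ν : Fin n → ℝ)
    (hμ : Antitone μ) (hν : Antitone ν) (hμ0 : ∀ i, 0 ≤ μ i) (hν0 : ∀ i, 0 ≤ ν i)
    (c : Fin n → Fin n → ℝ) (hc0 : ∀ i j, 0 ≤ c i j)
    (hrow : ∀ i, ∑ j, c i j ≤ 1) (hcol : ∀ j, ∑ i, c i j ≤ 1)
    (htot : ∑ i : Fin n, ∑ j : Fin n, c i j ≤ (k:ℝ)) :
    ∑ i : Fin n, ∑ j : Fin n, μ i * ν j * c i j ≤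
      ∑ i ∈ univ.filter (fun i : Fin n => (i:ℕ) < k), μ i * ν i := by
  classical
  set μ' : ℕ → ℝ := fun p => if h : p < n then μ ⟨p, h⟩ else 0 with hμ'
  set ν' : ℕ → ℝ := fun p => if h : p < n then ν ⟨p, h⟩ else 0 with hν'
  set α : ℕ → ℝ := fun p => μ' p - μ' (p + 1) with hα
  set β : ℕ → ℝ := fun p => ν' p - ν' (p + 1) with hβ
  set ind : ℕ → ℕ → ℝ := fun i p => if i ≤ p then 1 else 0 with hind
  have step_nonneg : ∀ (f : Fin n → ℝ), Antitone f → (∀ i, 0 ≤ f i) → ∀ p : ℕ,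
      0 ≤ (if h : p < n then f ⟨p, h⟩ else 0) - (if h : p + 1 < n then f ⟨p+1, h⟩ else 0) := by
    intro f hf hf0 p
    by_cases h1 : p < n
    · by_cases h2 : p + 1 < n
      · simpa [h1, h2, sub_nonneg] using hf (show (⟨p,h1⟩:Fin n) ≤ ⟨p+1,h2⟩ by
          simp [Fin.le_def])
      · simpa [h1, h2] using hf0 ⟨p, h1⟩
    · have h2 : ¬ p + 1 < n := by omega
      simp [h1, h2]
  have hα0 : ∀ p, 0 ≤ α p := fun p => step_nonneg μ hμ hμ0 p
  have hβ0 : ∀ p, 0 ≤ β p := fun p => step_nonneg ν hν hν0 p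
  -- representation of μ i as a sum of steps
  have hrep : ∀ (f : Fin n → ℝ) (i : Fin n),
      f i = ∑ p ∈ range n, ind (i:ℕ) p *
        ((if h : p < n then f ⟨p, h⟩ else 0) - (if h : p + 1 < n then f ⟨p+1, h⟩ else 0)) := by
    intro f i
    set f' : ℕ → ℝ := fun p => if h : p < n then f ⟨p, h⟩ else 0 with hf'
    have h1 : ∀ p ∈ range n, ind (i:ℕ) p * (f' p - f' (p+1))
        = if (i:ℕ) ≤ p then (f' p - f' (p+1)) else 0 := by
      intro p _; simp [hind, ite_mul]
    rw [Finset.sum_congr rfl h1, Finset.sum_ite, Finset.sum_const_zero, add_zero]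
    have h2 : (range n).filter (fun p => (i:ℕ) ≤ p) = Ico (i:ℕ) n := by
      ext p; simp only [mem_filter, mem_range, mem_Ico]; omega
    rw [h2, sum_Ico_telescope f' (le_of_lt i.2)]
    have : f' (i:ℕ) = f i := by simp [hf', i.2]
    have h3 : f' n = 0 := by simp [hf']
    rw [this, h3, sub_zero]
  have hμrep : ∀ i : Fin n, μ i = ∑ p ∈ range n, ind (i:ℕ) p * α p := fun i => hrep μ i
  have hνrep : ∀ i : Fin n, ν i = ∑ p ∈ range n, ind (i:ℕ) p * β p := fun i => hrep ν i
  
  set Kfin : Finset (Fin n) := univ.filter (fun i : Fin n => (i:ℕ) < k) with hKfin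
  set S : ℕ → ℕ → ℝ := fun p q => ∑ i : Fin n, ∑ j : Fin n, ind (i:ℕ) p * ind (j:ℕ) q * c i j with hS
  set T : ℕ → ℕ → ℝ := fun p q => ∑ i ∈ Kfin, ind (i:ℕ) p * ind (i:ℕ) q with hT
  have hind01 : ∀ i p, 0 ≤ ind i p ∧ ind i p ≤ 1 := by
    intro i p; simp only [hind]; split_ifs <;> norm_num
  -- Claim 1
  have claim1 : ∑ i : Fin n, ∑ j : Fin n, μ i * ν j * c i j
      = ∑ p ∈ range n, ∑ q ∈ range n, α p * β q * S p q := by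
    have e1 : ∀ (i j : Fin n), μ i * ν j * c i j
        = ∑ p ∈ range n, ∑ q ∈ range n,
            (ind (i:ℕ) p * α p) * (ind (j:ℕ) q * β q) * c i j := by
      intro i j
      rw [hμrep i, hνrep j, Finset.sum_mul_sum, Finset.sum_mul]
      exact Finset.sum_congr rfl fun p _ => by rw [Finset.sum_mul]
    calc ∑ i : Fin n, ∑ j : Fin n, μ i * ν j * c i j
        = ∑ i : Fin n, ∑ j : Fin n, ∑ p ∈ range n, ∑ q ∈ range n,
            (ind (i:ℕ) p * α p) * (ind (j:ℕ) q * β q) * c i j :=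
          Finset.sum_congr rfl fun i _ => Finset.sum_congr rfl fun j _ => e1 i j
      _ = ∑ i : Fin n, ∑ p ∈ range n, ∑ j : Fin n, ∑ q ∈ range n,
            (ind (i:ℕ) p * α p) * (ind (j:ℕ) q * β q) * c i j :=
          Finset.sum_congr rfl fun i _ => Finset.sum_comm
      _ = ∑ p ∈ range n, ∑ i : Fin n, ∑ j : Fin n, ∑ q ∈ range n,
            (ind (i:ℕ) p * α p) * (ind (j:ℕ) q * β q) * c i j := Finset.sum_comm
      _ = ∑ p ∈ range n, ∑ i : Fin n, ∑ q ∈ range n, ∑ j : Fin n,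
            (ind (i:ℕ) p * α p) * (ind (j:ℕ) q * β q) * c i j :=
          Finset.sum_congr rfl fun p _ => Finset.sum_congr rfl fun i _ => Finset.sum_comm
      _ = ∑ p ∈ range n, ∑ q ∈ range n, ∑ i : Fin n, ∑ j : Fin n,
            (ind (i:ℕ) p * α p) * (ind (j:ℕ) q * β q) * c i j :=
          Finset.sum_congr rfl fun p _ => Finset.sum_comm
      _ = ∑ p ∈ range n, ∑ q ∈ range n, α p * β q * S p q := by
          refine Finset.sum_congr rfl fun p _ => Finset.sum_congr rfl fun q _ => ?_
          simp only [hS, Finset.mul_sum]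
          exact Finset.sum_congr rfl fun i _ => Finset.sum_congr rfl fun j _ => by ring
  -- Claim 2
  have claim2 : ∑ i ∈ Kfin, μ i * ν i
      = ∑ p ∈ range n, ∑ q ∈ range n, α p * β q * T p q := by
    have e1 : ∀ i : Fin n, μ i * ν i
        = ∑ p ∈ range n, ∑ q ∈ range n,
            (ind (i:ℕ) p * α p) * (ind (i:ℕ) q * β q) := by
      intro i
      rw [hμrep i, hνrep i, Finset.sum_mul_sum]
    calc ∑ i ∈ Kfin, μ i * ν i
        = ∑ i ∈ Kfin, ∑ p ∈ range n, ∑ q ∈ range n,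
            (ind (i:ℕ) p * α p) * (ind (i:ℕ) q * β q) :=
          Finset.sum_congr rfl fun i _ => e1 i
      _ = ∑ p ∈ range n, ∑ i ∈ Kfin, ∑ q ∈ range n,
            (ind (i:ℕ) p * α p) * (ind (i:ℕ) q * β q) := Finset.sum_comm
      _ = ∑ p ∈ range n, ∑ q ∈ range n, ∑ i ∈ Kfin,
            (ind (i:ℕ) p * α p) * (ind (i:ℕ) q * β q) :=
          Finset.sum_congr rfl fun p _ => Finset.sum_comm
      _ = ∑ p ∈ range n, ∑ q ∈ range n, α p * β q * T p q := by
          refine Finset.sum_congr rfl fun p _ => Finset.sum_congr rfl fun q _ => ?_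
          simp only [hT, Finset.mul_sum]
          exact Finset.sum_congr rfl fun i _ => by ring
  -- Claim 3 : S ≤ T on range n × range n
  have claim3 : ∀ p ∈ range n, ∀ q ∈ range n, S p q ≤ T p q := by
    intro p hp q hq
    rw [Finset.mem_range] at hp hq
    -- value of T
    have hTval : T p q = ((min k (min (p+1) (q+1)) : ℕ) : ℝ) := by
      have hmn : min k (min (p+1) (q+1)) ≤ n := le_trans (min_le_left _ _) hk
      rw [hT]
      simp only [hKfin]
      rw [Finset.sum_filter]
      have : ∀ i : Fin n, (if (i:ℕ) < k then ind (i:ℕ) p * ind (i:ℕ) q else 0)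
          = if (i:ℕ) < min k (min (p+1) (q+1)) then (1:ℝ) else 0 := by
        intro i
        simp only [hind]
        split_ifs <;> first | (exfalso; omega) | norm_num
      rw [Finset.sum_congr rfl fun i _ => this i, Finset.sum_boole]
      rw [card_filter_lt_fin hmn]
    -- three upper bounds for S
    have b3 : S p q ≤ (k:ℝ) := by
      rw [hS]
      beta_reduce
      refine le_trans ?_ htot
      refine Finset.sum_le_sum fun i _ => Finset.sum_le_sum fun j _ => ?_
      calc ind (i:ℕ) p * ind (j:ℕ) q * c i j
          ≤ 1 * 1 * c i j := by
            apply mul_le_mul_of_nonneg_right _ (hc0 i j)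
            exact mul_le_mul (hind01 _ _).2 (hind01 _ _).2 (hind01 _ _).1 zero_le_one
        _ = c i j := by ring
    have b1 : S p q ≤ ((p+1 : ℕ) : ℝ) := by
      have grp : S p q = ∑ i : Fin n, ind (i:ℕ) p * ∑ j : Fin n, ind (j:ℕ) q * c i j := by
        rw [hS]
        refine Finset.sum_congr rfl fun i _ => ?_
        rw [Finset.mul_sum]
        exact Finset.sum_congr rfl fun j _ => by ring
      rw [grp]
      have inner_le : ∀ i : Fin n, ∑ j : Fin n, ind (j:ℕ) q * c i j ≤ 1 := by
        intro i
        refine le_trans (Finset.sum_le_sum fun j _ => ?_) (hrow i)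
        calc ind (j:ℕ) q * c i j ≤ 1 * c i j :=
              mul_le_mul_of_nonneg_right (hind01 _ _).2 (hc0 i j)
          _ = c i j := one_mul _
      have hsum : ∑ i : Fin n, ind (i:ℕ) p = ((p+1 : ℕ) : ℝ) := by
        have : ∀ i : Fin n, ind (i:ℕ) p = if (i:ℕ) < p + 1 then (1:ℝ) else 0 := by
          intro i; simp only [hind]; split_ifs <;> first | (exfalso; omega) | norm_num
        rw [Finset.sum_congr rfl fun i _ => this i, Finset.sum_boole,
          card_filter_lt_fin (by omega : p + 1 ≤ n)]
      calc ∑ i : Fin n, ind (i:ℕ) p * ∑ j : Fin n, ind (j:ℕ) q * c i j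
          ≤ ∑ i : Fin n, ind (i:ℕ) p := by
            refine Finset.sum_le_sum fun i _ => ?_
            calc ind (i:ℕ) p * ∑ j : Fin n, ind (j:ℕ) q * c i j
                ≤ ind (i:ℕ) p * 1 :=
                  mul_le_mul_of_nonneg_left (inner_le i) (hind01 _ _).1
              _ = ind (i:ℕ) p := mul_one _
        _ = ((p+1 : ℕ) : ℝ) := hsum
    have b2 : S p q ≤ ((q+1 : ℕ) : ℝ) := by
      have grp : S p q = ∑ j : Fin n, ind (j:ℕ) q * ∑ i : Fin n, ind (i:ℕ) p * c i j := by
        rw [hS]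
        beta_reduce
        rw [Finset.sum_comm]
        refine Finset.sum_congr rfl fun j _ => ?_
        rw [Finset.mul_sum]
        exact Finset.sum_congr rfl fun i _ => by ring
      rw [grp]
      have inner_le : ∀ j : Fin n, ∑ i : Fin n, ind (i:ℕ) p * c i j ≤ 1 := by
        intro j
        refine le_trans (Finset.sum_le_sum fun i _ => ?_) (hcol j)
        calc ind (i:ℕ) p * c i j ≤ 1 * c i j :=
              mul_le_mul_of_nonneg_right (hind01 _ _).2 (hc0 i j)
          _ = c i j := one_mul _
      have hsum : ∑ j : Fin n, ind (j:ℕ) q = ((q+1 : ℕ) : ℝ) := by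
        have : ∀ j : Fin n, ind (j:ℕ) q = if (j:ℕ) < q + 1 then (1:ℝ) else 0 := by
          intro j; simp only [hind]; split_ifs <;> first | (exfalso; omega) | norm_num
        rw [Finset.sum_congr rfl fun j _ => this j, Finset.sum_boole,
          card_filter_lt_fin (by omega : q + 1 ≤ n)]
      calc ∑ j : Fin n, ind (j:ℕ) q * ∑ i : Fin n, ind (i:ℕ) p * c i j
          ≤ ∑ j : Fin n, ind (j:ℕ) q := by
            refine Finset.sum_le_sum fun j _ => ?_
            calc ind (j:ℕ) q * ∑ i : Fin n, ind (i:ℕ) p * c i j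
                ≤ ind (j:ℕ) q * 1 :=
                  mul_le_mul_of_nonneg_left (inner_le j) (hind01 _ _).1
              _ = ind (j:ℕ) q := mul_one _
        _ = ((q+1 : ℕ) : ℝ) := hsum
    rw [hTval, Nat.cast_min, Nat.cast_min]
    exact le_min b3 (le_min b1 b2)
  -- conclude
  rw [claim1, claim2]
  refine Finset.sum_le_sum fun p hp => Finset.sum_le_sum fun q hq => ?_
  exact mul_le_mul_of_nonneg_left (claim3 p hp q hq)
    (mul_nonneg (hα0 p) (hβ0 q))



private lemma parseval_sq {n : ℕ} (v : Fin n → Fin n → ℝ)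
    (hv : ∀ a b, ∑ j : Fin n, v j a * v j b = if a = b then (1:ℝ) else 0)
    (g : Fin n → ℝ) : ∑ j : Fin n, (∑ a, g a * v j a)^2 = ∑ a, (g a)^2 := by
  calc ∑ j : Fin n, (∑ a, g a * v j a)^2
      = ∑ j : Fin n, ∑ a, ∑ b, (g a * g b) * (v j a * v j b) := by
        refine sum_congr rfl fun j _ => ?_
        rw [sq, Finset.sum_mul_sum]
        exact sum_congr rfl fun a _ => sum_congr rfl fun b _ => by ring
    _ = ∑ a, ∑ j : Fin n, ∑ b, (g a * g b) * (v j a * v j b) := Finset.sum_comm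
    _ = ∑ a, ∑ b, ∑ j : Fin n, (g a * g b) * (v j a * v j b) :=
        sum_congr rfl fun a _ => Finset.sum_comm
    _ = ∑ a, ∑ b, (g a * g b) * ∑ j : Fin n, v j a * v j b :=
        sum_congr rfl fun a _ => sum_congr rfl fun b _ => (Finset.mul_sum _ _ _).symm
    _ = ∑ a, (g a)^2 := by
        refine sum_congr rfl fun a _ => ?_
        simp only [hv]
        simp [sq, mul_ite]

/-- Weak majorization of the eigenvalues of the Hadamard product by the
products of eigenvalues (all listed in decreasing order). -/
theorem stmt2 {n : ℕ} (A B : Matrix (Fin n) (Fin n) ℝ)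
    (hA : A.IsHermitian) (hB : B.IsHermitian)
    (hApos : A.PosSemidef) (hBpos : B.PosSemidef)
    (hAB : (Matrix.hadamard A B).IsHermitian)
    (μ ν η : Fin n → ℝ) (hμmono : Antitone μ) (hνmono : Antitone ν) (hηmono : Antitone η)
    (hμ : ∃ e : Equiv.Perm (Fin n), ∀ i, μ i = hA.eigenvalues (e i))
    (hν : ∃ e : Equiv.Perm (Fin n), ∀ i, ν i = hB.eigenvalues (e i))
    (hη : ∃ e : Equiv.Perm (Fin n), ∀ i, η i = hAB.eigenvalues (e i)) :
    ∀ k : ℕ, k ≤ n →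
      ∑ i ∈ univ.filter (fun i : Fin n => (i : ℕ) < k), η i ≤
        ∑ i ∈ univ.filter (fun i : Fin n => (i : ℕ) < k), μ i * ν i := by
  intro k hk
  classical
  obtain ⟨eA, heA⟩ := hμ
  obtain ⟨eB, heB⟩ := hν
  obtain ⟨eC, heC⟩ := hη
  obtain ⟨u, hu1, hu2, hu3⟩ := spectral_decomp hA μ eA heA
  obtain ⟨v, hv1, hv2, hv3⟩ := spectral_decomp hB ν eB heB
  obtain ⟨w, hw1, hw2, hw3⟩ := spectral_decomp hAB η eC heC
  have hμ0 : ∀ i, 0 ≤ μ i := fun i => (heA i) ▸ hApos.eigenvalues_nonneg (eA i)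
  have hν0 : ∀ i, 0 ≤ ν i := fun i => (heB i) ▸ hBpos.eigenvalues_nonneg (eB i)
  set K : Finset (Fin n) := univ.filter (fun i : Fin n => (i : ℕ) < k) with hK
  set M : Matrix (Fin n) (Fin n) ℝ := Matrix.hadamard A B with hMdef
  set W : Fin n → Fin n → Fin n → ℝ :=
    fun t i j => ∑ a, w t a * (u i a * v j a) with hW
  set c : Fin n → Fin n → ℝ := fun i j => ∑ t ∈ K, (W t i j)^2 with hc
  -- Claim A : quadratic form of M at eigenvector t gives η t
  have claimA : ∀ t : Fin n, ∑ a, ∑ b, w t a * (M a b * w t b) = η t := by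
    intro t
    calc ∑ a, ∑ b, w t a * (M a b * w t b)
        = ∑ a, ∑ b, ∑ s, η s * (w s a * w s b) * (w t a * w t b) := by
          refine sum_congr rfl fun a _ => sum_congr rfl fun b _ => ?_
          rw [hw1 a b, Finset.sum_mul, Finset.mul_sum]
          exact sum_congr rfl fun s _ => by ring
      _ = ∑ a, ∑ s, ∑ b, η s * (w s a * w s b) * (w t a * w t b) :=
          sum_congr rfl fun a _ => Finset.sum_comm
      _ = ∑ s, ∑ a, ∑ b, η s * (w s a * w s b) * (w t a * w t b) := Finset.sum_comm
      _ = ∑ s, η s * ((∑ a, w t a * w s a) * (∑ b, w t b * w s b)) := by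
          refine sum_congr rfl fun s _ => ?_
          conv_rhs => rw [Finset.sum_mul_sum, Finset.mul_sum]
          refine sum_congr rfl fun a _ => ?_
          rw [Finset.mul_sum]
          exact sum_congr rfl fun b _ => by ring
      _ = η t := by
          simp only [hw2]
          simp
  -- Claim B : quadratic form expands through the two spectral decompositions
  have claimB : ∀ t : Fin n, ∑ a, ∑ b, w t a * (M a b * w t b)
      = ∑ i, ∑ j, μ i * ν j * (W t i j)^2 := by
    intro t
    calc ∑ a, ∑ b, w t a * (M a b * w t b)
        = ∑ a, ∑ b, ∑ i, ∑ j,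
            (μ i * ν j) * ((w t a * (u i a * v j a)) * (w t b * (u i b * v j b))) := by
          refine sum_congr rfl fun a _ => sum_congr rfl fun b _ => ?_
          have hMab : M a b = (∑ i, μ i * (u i a * u i b)) * (∑ j, ν j * (v j a * v j b)) := by
            rw [hMdef, Matrix.hadamard_apply, hu1 a b, hv1 a b]
          rw [hMab, Finset.sum_mul_sum, Finset.sum_mul, Finset.mul_sum]
          refine sum_congr rfl fun i _ => ?_
          rw [Finset.sum_mul, Finset.mul_sum]
          exact sum_congr rfl fun j _ => by ring
      _ = ∑ a, ∑ i, ∑ b, ∑ j,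
            (μ i * ν j) * ((w t a * (u i a * v j a)) * (w t b * (u i b * v j b))) :=
          sum_congr rfl fun a _ => Finset.sum_comm
      _ = ∑ i, ∑ a, ∑ b, ∑ j,
            (μ i * ν j) * ((w t a * (u i a * v j a)) * (w t b * (u i b * v j b))) :=
          Finset.sum_comm
      _ = ∑ i, ∑ a, ∑ j, ∑ b,
            (μ i * ν j) * ((w t a * (u i a * v j a)) * (w t b * (u i b * v j b))) :=
          sum_congr rfl fun i _ => sum_congr rfl fun a _ => Finset.sum_comm
      _ = ∑ i, ∑ j, ∑ a, ∑ b,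
            (μ i * ν j) * ((w t a * (u i a * v j a)) * (w t b * (u i b * v j b))) :=
          sum_congr rfl fun i _ => Finset.sum_comm
      _ = ∑ i, ∑ j, μ i * ν j * (W t i j)^2 := by
          refine sum_congr rfl fun i _ => sum_congr rfl fun j _ => ?_
          rw [hW]
          beta_reduce
          rw [sq, Finset.sum_mul_sum, Finset.mul_sum]
          refine sum_congr rfl fun a _ => ?_
          rw [Finset.mul_sum]
  -- rewrite the left-hand side
  have lhs_eq : ∑ t ∈ K, η t = ∑ i, ∑ j, μ i * ν j * c i j := by
    calc ∑ t ∈ K, η t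
        = ∑ t ∈ K, ∑ i, ∑ j, μ i * ν j * (W t i j)^2 :=
          sum_congr rfl fun t _ => (claimA t).symm.trans (claimB t)
      _ = ∑ i, ∑ t ∈ K, ∑ j, μ i * ν j * (W t i j)^2 := Finset.sum_comm
      _ = ∑ i, ∑ j, ∑ t ∈ K, μ i * ν j * (W t i j)^2 :=
          sum_congr rfl fun i _ => Finset.sum_comm
      _ = ∑ i, ∑ j, μ i * ν j * c i j := by
          refine sum_congr rfl fun i _ => sum_congr rfl fun j _ => ?_
          rw [hc]
          beta_reduce
          rw [Finset.mul_sum]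
  -- properties of c
  have hc0 : ∀ i j, 0 ≤ c i j := fun i j => Finset.sum_nonneg fun t _ => sq_nonneg _
  have row_aux : ∀ t i, ∑ j, (W t i j)^2 = ∑ a, (w t a * u i a)^2 := by
    intro t i
    have := parseval_sq v hv3 (fun a => w t a * u i a)
    rw [← this]
    refine sum_congr rfl fun j _ => ?_
    rw [hW]
    beta_reduce
    congr 1
    exact sum_congr rfl fun a _ => by ring
  have col_aux : ∀ t j, ∑ i, (W t i j)^2 = ∑ a, (w t a * v j a)^2 := by
    intro t j
    have := parseval_sq u hu3 (fun a => w t a * v j a)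
    rw [← this]
    refine sum_congr rfl fun i _ => ?_
    rw [hW]
    beta_reduce
    congr 1
    exact sum_congr rfl fun a _ => by ring
  have wnorm_row : ∀ i : Fin n, ∑ t : Fin n, ∑ a, (w t a * u i a)^2 = 1 := by
    intro i
    calc ∑ t : Fin n, ∑ a, (w t a * u i a)^2
        = ∑ a, ∑ t : Fin n, (w t a * u i a)^2 := Finset.sum_comm
      _ = ∑ a, (u i a)^2 * ∑ t : Fin n, w t a * w t a := by
          refine sum_congr rfl fun a _ => ?_
          rw [Finset.mul_sum]
          exact sum_congr rfl fun t _ => by ring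
      _ = ∑ a, (u i a)^2 := by
          refine sum_congr rfl fun a _ => ?_
          rw [hw3 a a]
          simp
      _ = 1 := by simpa [sq] using hu2 i i
  have wnorm_col : ∀ j : Fin n, ∑ t : Fin n, ∑ a, (w t a * v j a)^2 = 1 := by
    intro j
    calc ∑ t : Fin n, ∑ a, (w t a * v j a)^2
        = ∑ a, ∑ t : Fin n, (w t a * v j a)^2 := Finset.sum_comm
      _ = ∑ a, (v j a)^2 * ∑ t : Fin n, w t a * w t a := by
          refine sum_congr rfl fun a _ => ?_
          rw [Finset.mul_sum]
          exact sum_congr rfl fun t _ => by ring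
      _ = ∑ a, (v j a)^2 := by
          refine sum_congr rfl fun a _ => ?_
          rw [hw3 a a]
          simp
      _ = 1 := by simpa [sq] using hv2 j j
  have hrow : ∀ i, ∑ j, c i j ≤ 1 := by
    intro i
    calc ∑ j, c i j = ∑ t ∈ K, ∑ j, (W t i j)^2 := by
          rw [hc]; exact Finset.sum_comm
      _ = ∑ t ∈ K, ∑ a, (w t a * u i a)^2 :=
          sum_congr rfl fun t _ => row_aux t i
      _ ≤ ∑ t : Fin n, ∑ a, (w t a * u i a)^2 :=
          Finset.sum_le_sum_of_subset_of_nonneg (subset_univ K)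
            (fun t _ _ => Finset.sum_nonneg fun a _ => sq_nonneg _)
      _ = 1 := wnorm_row i
  have hcol : ∀ j, ∑ i, c i j ≤ 1 := by
    intro j
    calc ∑ i, c i j = ∑ t ∈ K, ∑ i, (W t i j)^2 := by
          rw [hc]; exact Finset.sum_comm
      _ = ∑ t ∈ K, ∑ a, (w t a * v j a)^2 :=
          sum_congr rfl fun t _ => col_aux t j
      _ ≤ ∑ t : Fin n, ∑ a, (w t a * v j a)^2 :=
          Finset.sum_le_sum_of_subset_of_nonneg (subset_univ K)
            (fun t _ _ => Finset.sum_nonneg fun a _ => sq_nonneg _)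
      _ = 1 := wnorm_col j
  have htot : ∑ i, ∑ j, c i j ≤ (k:ℝ) := by
    have hKcard : K.card = k := card_filter_lt_fin hk
    calc ∑ i, ∑ j, c i j
        = ∑ i, ∑ t ∈ K, ∑ j, (W t i j)^2 :=
          sum_congr rfl fun i _ => by rw [hc]; exact Finset.sum_comm
      _ = ∑ t ∈ K, ∑ i, ∑ j, (W t i j)^2 := Finset.sum_comm
      _ = ∑ t ∈ K, ∑ i, ∑ a, (w t a * u i a)^2 :=
          sum_congr rfl fun t _ => sum_congr rfl fun i _ => row_aux t i
      _ = ∑ t ∈ K, ∑ a, ∑ i, (w t a * u i a)^2 :=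
          sum_congr rfl fun t _ => Finset.sum_comm
      _ = ∑ t ∈ K, (1:ℝ) := by
          refine sum_congr rfl fun t _ => ?_
          calc ∑ a, ∑ i, (w t a * u i a)^2
              = ∑ a, (w t a)^2 * ∑ i, u i a * u i a := by
                refine sum_congr rfl fun a _ => ?_
                rw [Finset.mul_sum]
                exact sum_congr rfl fun i _ => by ring
            _ = ∑ a, (w t a)^2 := by
                refine sum_congr rfl fun a _ => ?_
                rw [hu3 a a]
                simp
            _ = 1 := by simpa [sq] using hw2 t t
      _ ≤ (k:ℝ) := by rw [Finset.sum_const, hKcard]; simp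
  rw [lhs_eq]
  exact abel_bound hk μ ν hμmono hνmono hμ0 hν0 c hc0 hrow hcol htot
end

section
/- Schur's theorem: For a real symmetric n×n matrix A, the vector of diagonal entries (A(1,1),...,A(n,n)) is majorized by the vector of eigenvalues (λ₁(A),...,λₙ(A)); that is, for each k, the sum of the k largest diagonal entries is at most the sum of the k largest eigenvalues, with equality of total sums (both equal to the trace). -/
open Finset

lemma card_filt {n k : ℕ} (hk : k ≤ n) :
    (univ.filter (fun i : Fin n => (i : ℕ) < k)).card = k := by
  have h : univ.filter (fun i : Fin n => (i : ℕ) < k)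
      = Finset.map (Fin.castLEEmb hk) univ := by
    ext j
    simp only [mem_filter, mem_univ, true_and, mem_map, Fin.castLEEmb_apply]
    constructor
    · intro h; exact ⟨⟨j, h⟩, rfl⟩
    · rintro ⟨i, rfl⟩; exact i.2
  simp [h]

lemma key_ineq {n k : ℕ} (hk : k ≤ n) (μ : Fin n → ℝ) (hμ : Antitone μ)
    (c : Fin n → ℝ) (hc0 : ∀ j, 0 ≤ c j) (hc1 : ∀ j, c j ≤ 1)
    (hsum : ∑ j, c j = k) :
    ∑ j, c j * μ j ≤ ∑ j ∈ univ.filter (fun j : Fin n => (j : ℕ) < k), μ j := by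
  rcases eq_or_lt_of_le hk with heq | hklt
  · subst heq
    have hall : ∀ j : Fin k, c j = 1 := by
      have h0 : ∑ j : Fin k, (1 - c j) = 0 := by
        simp [Finset.sum_sub_distrib, hsum]
      intro j
      have := (Finset.sum_eq_zero_iff_of_nonneg
        (fun j _ => by linarith [hc1 j])).mp h0 j (mem_univ j)
      linarith
    have hfil : univ.filter (fun j : Fin k => (j : ℕ) < k) = univ := by
      apply filter_true_of_mem; intro j _; exact j.2
    rw [hfil]
    exact le_of_eq (Finset.sum_congr rfl fun j _ => by rw [hall j, one_mul])
  · set m : Fin n := ⟨k, hklt⟩ with hm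
    set S := univ.filter (fun j : Fin n => (j : ℕ) < k) with hS
    have hcardS : S.card = k := card_filt hk
    have hsplit : ∑ j, c j * μ j
        = ∑ j ∈ S, c j * μ j + ∑ j ∈ univ.filter (fun j : Fin n => ¬ ((j : ℕ) < k)), c j * μ j :=
      (Finset.sum_filter_add_sum_filter_not univ _ _).symm
    have hcsplit : ∑ j ∈ S, c j + ∑ j ∈ univ.filter (fun j : Fin n => ¬ ((j : ℕ) < k)), c j = k := by
      rw [Finset.sum_filter_add_sum_filter_not]; exact hsum
    calc ∑ j, c j * μ j
        = ∑ j ∈ S, c j * μ j + ∑ j ∈ univ.filter (fun j : Fin n => ¬ ((j : ℕ) < k)), c j * μ j :=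
          hsplit
      _ ≤ ∑ j ∈ S, c j * μ j + ∑ j ∈ univ.filter (fun j : Fin n => ¬ ((j : ℕ) < k)), c j * μ m := by
          refine add_le_add le_rfl ?_
          apply Finset.sum_le_sum
          intro j hj
          simp only [mem_filter, mem_univ, true_and, not_lt] at hj
          exact mul_le_mul_of_nonneg_left (hμ (by exact hj : m ≤ j)) (hc0 j)
      _ = ∑ j ∈ S, c j * μ j + ((k : ℝ) - ∑ j ∈ S, c j) * μ m := by
          rw [← Finset.sum_mul]
          congr 2
          linarith [hcsplit]
      _ = ∑ j ∈ S, c j * μ j + ∑ j ∈ S, (1 - c j) * μ m := by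
          congr 1
          rw [← Finset.sum_mul]
          congr 1
          rw [Finset.sum_sub_distrib]
          simp [hcardS]
      _ ≤ ∑ j ∈ S, c j * μ j + ∑ j ∈ S, (1 - c j) * μ j := by
          refine add_le_add le_rfl ?_
          apply Finset.sum_le_sum
          intro j hj
          simp only [hS, mem_filter, mem_univ, true_and] at hj
          have hjm : j ≤ m := le_of_lt (by exact hj : (j : ℕ) < (m : ℕ))
          exact mul_le_mul_of_nonneg_left (hμ hjm) (by linarith [hc1 j])
      _ = ∑ j ∈ S, μ j := by
          rw [← Finset.sum_add_distrib]
          exact Finset.sum_congr rfl fun j _ => by ring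

/-- Schur's theorem: the diagonal of a real symmetric matrix is majorized by
its eigenvalues. Here `d` is a decreasing rearrangement of the diagonal and
`μ` a decreasing enumeration of the eigenvalues. -/
theorem stmt3 {n : ℕ} (A : Matrix (Fin n) (Fin n) ℝ) (hA : A.IsHermitian)
    (d : Fin n → ℝ) (hd : Antitone d)
    (hdperm : ∃ e : Equiv.Perm (Fin n), ∀ i, d i = A (e i) (e i))
    (μ : Fin n → ℝ) (hμ : Antitone μ)
    (hμperm : ∃ e : Equiv.Perm (Fin n), ∀ i, μ i = hA.eigenvalues (e i)) :
    (∀ k : ℕ, k ≤ n →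
      ∑ i ∈ univ.filter (fun i : Fin n => (i : ℕ) < k), d i ≤
        ∑ i ∈ univ.filter (fun i : Fin n => (i : ℕ) < k), μ i) ∧
    ∑ i, d i = ∑ i, μ i := by
  obtain ⟨e, he⟩ := hdperm
  obtain ⟨f, hf⟩ := hμperm
  set U : Matrix (Fin n) (Fin n) ℝ := (hA.eigenvectorUnitary : Matrix (Fin n) (Fin n) ℝ) with hU
  set lam : Fin n → ℝ := hA.eigenvalues with hlam
  have hdiag : ∀ i, A i i = ∑ j, (U i j)^2 * lam j := by
    intro i
    conv_lhs => rw [hA.spectral_theorem]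
    simp [Matrix.mul_apply, Matrix.diagonal_apply, Finset.sum_mul, hU, hlam,
      Matrix.IsHermitian.eigenvectorUnitary_apply]
    ring_nf
  have hrow : ∀ i, ∑ j, (U i j)^2 = 1 := by
    intro i
    have h := (Matrix.mem_unitaryGroup_iff).mp hA.eigenvectorUnitary.2
    have := congrFun (congrFun h i) i
    simpa [Matrix.mul_apply, sq, Matrix.one_apply, hU, Matrix.IsHermitian.eigenvectorUnitary_apply] using this
  have hcol : ∀ j, ∑ i, (U i j)^2 = 1 := by
    intro j
    have h := (Matrix.mem_unitaryGroup_iff').mp hA.eigenvectorUnitary.2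
    have := congrFun (congrFun h j) j
    simpa [Matrix.mul_apply, sq, Matrix.one_apply, hU, Matrix.IsHermitian.eigenvectorUnitary_apply] using this
  have hμlam : ∀ j, lam j = μ (f.symm j) := by
    intro j; rw [hf (f.symm j), Equiv.apply_symm_apply]
  constructor
  · intro k hk
    set S := univ.filter (fun i : Fin n => (i : ℕ) < k) with hS
    set c : Fin n → ℝ := fun j => ∑ i ∈ S, (U (e i) (f j))^2 with hc
    have hstep : ∑ i ∈ S, d i = ∑ j, c j * μ j := by
      calc ∑ i ∈ S, d i = ∑ i ∈ S, ∑ j, (U (e i) j)^2 * lam j := by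
            exact Finset.sum_congr rfl fun i _ => by rw [he i, hdiag (e i)]
        _ = ∑ i ∈ S, ∑ j, (U (e i) (f j))^2 * lam (f j) := by
            refine Finset.sum_congr rfl fun i _ => ?_
            exact (Equiv.sum_comp f (fun j => (U (e i) j)^2 * lam j)).symm
        _ = ∑ j, ∑ i ∈ S, (U (e i) (f j))^2 * μ j := by
            rw [Finset.sum_comm]
            refine Finset.sum_congr rfl fun j _ => Finset.sum_congr rfl fun i _ => ?_
            rw [hμlam (f j), Equiv.symm_apply_apply]
        _ = ∑ j, c j * μ j := by
            refine Finset.sum_congr rfl fun j _ => ?_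
            rw [hc, Finset.sum_mul]
    rw [hstep]
    apply key_ineq hk μ hμ c
    · intro j; exact Finset.sum_nonneg fun i _ => sq_nonneg _
    · intro j
      calc c j ≤ ∑ i : Fin n, (U (e i) (f j))^2 :=
            Finset.sum_le_sum_of_subset_of_nonneg (Finset.subset_univ S)
              (fun i _ _ => sq_nonneg _)
        _ = ∑ i, (U i (f j))^2 := Equiv.sum_comp e (fun i => (U i (f j))^2)
        _ = 1 := hcol (f j)
    · calc ∑ j, c j = ∑ j, ∑ i ∈ S, (U (e i) (f j))^2 := rfl
        _ = ∑ i ∈ S, ∑ j, (U (e i) (f j))^2 := Finset.sum_comm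
        _ = ∑ i ∈ S, (1 : ℝ) := by
            refine Finset.sum_congr rfl fun i _ => ?_
            rw [Equiv.sum_comp f (fun j => (U (e i) j)^2)]
            exact hrow (e i)
        _ = k := by rw [Finset.sum_const, hS, card_filt hk]; simp
  · calc ∑ i, d i = ∑ i, A (e i) (e i) := Finset.sum_congr rfl fun i _ => he i
      _ = ∑ i, A i i := Equiv.sum_comp e (fun i => A i i)
      _ = ∑ i, ∑ j, (U i j)^2 * lam j := Finset.sum_congr rfl fun i _ => hdiag i
      _ = ∑ j, (∑ i, (U i j)^2) * lam j := by
          rw [Finset.sum_comm]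
          exact Finset.sum_congr rfl fun j _ => by rw [Finset.sum_mul]
      _ = ∑ j, lam j := Finset.sum_congr rfl fun j _ => by rw [hcol j, one_mul]
      _ = ∑ i, μ i := by
          rw [← Equiv.sum_comp f lam]
          exact Finset.sum_congr rfl fun i _ => (hf i).symm
end
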